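/- Let p ∈ (0,1) be real and let d, n be natural numbers with 2 ≤ d ≤ n. Then for every function a : {0,1,…,d-1} → ℝ with a_i ≥ 0 for all i, Σ_{i=0}^{d-1} i·a_i ≤ d, and Σ_{i=0}^{d-1} a_i ≤ 2n/d, one has Σ_{i=0}^{d-1} a_i·p^{d-i} ≤ (d/(d-1))·p + (2n/d - d/(d-1))·p^d. -/

import Mathlib

lemma lp_key (p : ℝ) (hp0 : 0 < p) (hp1 : p < 1)
    (d i : ℕ) (hd2 : 2 ≤ d) (hi : i < d) :
    p ^ (d - i) ≤ (i : ℝ) * ((p - p ^ d) / ((d : ℝ) - 1)) + p ^ d := by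
  have hD1 : (0:ℝ) < (d : ℝ) - 1 := by
    have : (2:ℝ) ≤ (d:ℝ) := by exact_mod_cast hd2
    linarith
  set s : ℝ := (i : ℝ) / ((d : ℝ) - 1) with hs_def
  set t : ℝ := ((d : ℝ) - 1 - (i : ℝ)) / ((d : ℝ) - 1) with ht_def
  have hiR : (i : ℝ) ≤ (d : ℝ) - 1 := by
    have : (i:ℝ) + 1 ≤ (d:ℝ) := by exact_mod_cast Nat.succ_le_of_lt hi
    linarith
  have hs : 0 ≤ s := div_nonneg (Nat.cast_nonneg i) hD1.le
  have ht : 0 ≤ t := div_nonneg (by linarith) hD1.le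
  have hst : s + t = 1 := by
    rw [hs_def, ht_def, ← add_div]
    field_simp
    ring
  have hconv := convexOn_exp.2 (Set.mem_univ (Real.log p))
    (Set.mem_univ ((d : ℝ) * Real.log p)) hs ht hst
  simp only [smul_eq_mul] at hconv
  have hexp1 : Real.exp (Real.log p) = p := Real.exp_log hp0
  have hexp2 : Real.exp ((d : ℝ) * Real.log p) = p ^ d := by
    rw [Real.exp_nat_mul, hexp1]
  have hcomb : s * Real.log p + t * ((d : ℝ) * Real.log p)
      = ((d - i : ℕ) : ℝ) * Real.log p := by
    have hcast : ((d - i : ℕ) : ℝ) = (d : ℝ) - (i : ℝ) := by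
      have := Nat.cast_sub hi.le (R := ℝ)
      exact this
    rw [hcast, hs_def, ht_def]
    field_simp
    ring
  have hexp3 : Real.exp (((d - i : ℕ) : ℝ) * Real.log p) = p ^ (d - i) := by
    rw [Real.exp_nat_mul, hexp1]
  rw [hcomb, hexp1, hexp2, hexp3] at hconv
  have heq : s * p + t * p ^ d
      = (i : ℝ) * ((p - p ^ d) / ((d : ℝ) - 1)) + p ^ d := by
    rw [hs_def, ht_def]
    field_simp
    ring
  linarith [hconv, heq.ge, heq.le]

theorem lp_general_closed_form (p : ℝ) (hp0 : 0 < p) (hp1 : p < 1)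
    (d n : ℕ) (hd2 : 2 ≤ d) (hdn : d ≤ n)
    (a : ℕ → ℝ) (ha : ∀ i, 0 ≤ a i)
    (h1 : ∑ i ∈ Finset.range d, (i : ℝ) * a i ≤ (d : ℝ))
    (h2 : ∑ i ∈ Finset.range d, a i ≤ 2 * (n : ℝ) / d) :
    ∑ i ∈ Finset.range d, a i * p ^ (d - i) ≤
      (d : ℝ) / ((d : ℝ) - 1) * p + (2 * (n : ℝ) / d - (d : ℝ) / ((d : ℝ) - 1)) * p ^ d := by
  have hD1 : (0:ℝ) < (d : ℝ) - 1 := by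
    have : (2:ℝ) ≤ (d:ℝ) := by exact_mod_cast hd2
    linarith
  have hD0 : (0:ℝ) < (d : ℝ) := by linarith
  set y : ℝ := (p - p ^ d) / ((d : ℝ) - 1) with hy_def
  have hpd : p ^ d ≤ p := by
    calc p ^ d ≤ p ^ 1 := pow_le_pow_of_le_one hp0.le hp1.le (by omega)
    _ = p := pow_one p
  have hy : 0 ≤ y := div_nonneg (by linarith) hD1.le
  have hpdn : 0 ≤ p ^ d := pow_nonneg hp0.le d
  calc ∑ i ∈ Finset.range d, a i * p ^ (d - i)
      ≤ ∑ i ∈ Finset.range d, (y * ((i : ℝ) * a i) + p ^ d * a i) := by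
        apply Finset.sum_le_sum
        intro i hi
        have hkey := lp_key p hp0 hp1 d i hd2 (Finset.mem_range.mp hi)
        have := mul_le_mul_of_nonneg_left hkey (ha i)
        calc a i * p ^ (d - i) ≤ a i * ((i : ℝ) * y + p ^ d) := this
        _ = y * ((i : ℝ) * a i) + p ^ d * a i := by ring
    _ = y * (∑ i ∈ Finset.range d, (i : ℝ) * a i)
        + p ^ d * (∑ i ∈ Finset.range d, a i) := by
        rw [Finset.sum_add_distrib, Finset.mul_sum, Finset.mul_sum]
    _ ≤ y * (d : ℝ) + p ^ d * (2 * (n : ℝ) / d) :=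
        add_le_add (mul_le_mul_of_nonneg_left h1 hy)
          (mul_le_mul_of_nonneg_left h2 hpdn)
    _ = (d : ℝ) / ((d : ℝ) - 1) * p + (2 * (n : ℝ) / d - (d : ℝ) / ((d : ℝ) - 1)) * p ^ d := by
        rw [hy_def]
        field_simp
        ring
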